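/- If (p,q,r,s) is a bad quadruple with p, r ∈ P_K and q, s ∈ P_L, where K ≥ L, then m_p ≡ m_r (mod 2^{K² − L²}). -/

import Mathlib

/-- `m_p := ⌊2^{K_p²}·α·φ_p⌋`. -/
noncomputable def mfun (φ : ℕ → ℝ) (Kp : ℕ → ℕ) (α : ℝ) (p : ℕ) : ℕ :=
  ⌊(2 : ℝ) ^ ((Kp p) ^ 2) * α * φ p⌋₊

/-- `δ_{ip}`: the binary digit of `m_p` of weight `2^{K_p² − i}` (for `1 ≤ i ≤ K_p²`). -/
noncomputable def dig (φ : ℕ → ℝ) (Kp : ℕ → ℕ) (α : ℝ) (i p : ℕ) : ℕ :=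
  mfun φ Kp α p / 2 ^ ((Kp p) ^ 2 - i) % 2

/-- `Δ_{ip} := Σ_{j=(i−1)²+1}^{i²} δ_{jp}·2^{i²−j}` for `1 ≤ i ≤ K_p`, and `0` for `i > K_p`. -/
noncomputable def Blk (φ : ℕ → ℝ) (Kp : ℕ → ℕ) (α : ℝ) (i p : ℕ) : ℕ :=
  if i ≤ Kp p then ∑ j ∈ Finset.Icc ((i - 1) ^ 2 + 1) (i ^ 2), dig φ Kp α j p * 2 ^ (i ^ 2 - j)
  else 0

/-- `t_p := 2^{K_p² + 3K_p + 2}`. -/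
def tfun (Kp : ℕ → ℕ) (p : ℕ) : ℕ := 2 ^ ((Kp p) ^ 2 + 3 * Kp p + 2)

/-- `a_p := Σ_{i=1}^{K_p} Δ_{ip}·2^{(i−1)²+3i} + t_p`. -/
noncomputable def afun (φ : ℕ → ℝ) (Kp : ℕ → ℕ) (α : ℝ) (p : ℕ) : ℕ :=
  (∑ i ∈ Finset.Icc 1 (Kp p), Blk φ Kp α i p * 2 ^ ((i - 1) ^ 2 + 3 * i)) + tfun Kp p

/-- A quadruple `(p,q,r,s)` is bad (w.r.t. `α`) if `a_p + a_q = a_r + a_s` and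
`a_p > a_r ≥ a_s > a_q`. -/
noncomputable def IsBad (φ : ℕ → ℝ) (Kp : ℕ → ℕ) (α : ℝ) (p q r s : ℕ) : Prop :=
  afun φ Kp α p + afun φ Kp α q = afun φ Kp α r + afun φ Kp α s ∧
  afun φ Kp α r < afun φ Kp α p ∧ afun φ Kp α s ≤ afun φ Kp α r ∧ afun φ Kp α q < afun φ Kp α s

/-- The hypothesis defining `φ_p = (1/π)·arctan(v_p/u_p)` for primes `p ≡ 1 (mod 4)`,
where `p = u_p² + v_p²` with `u_p > v_p > 0`. -/
def PhiHyp (u v : ℕ → ℕ) (φ : ℕ → ℝ) : Prop :=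
  ∀ p : ℕ, p.Prime → p % 4 = 1 →
    0 < v p ∧ v p < u p ∧ p = (u p) ^ 2 + (v p) ^ 2 ∧
    φ p = (1 / Real.pi) * Real.arctan ((v p : ℝ) / (u p : ℝ))

/-- The hypothesis defining `K_p`: the unique integer `K > 2` with
`2^{(K−2)²} < p^β < 2^{(K−1)²}`, for primes `p ≡ 1 (mod 4)`. -/
def KpHyp (β : ℝ) (Kp : ℕ → ℕ) : Prop :=
  ∀ p : ℕ, p.Prime → p % 4 = 1 →
    2 < Kp p ∧ (2 : ℝ) ^ ((Kp p - 2) ^ 2) < (p : ℝ) ^ β ∧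
      (p : ℝ) ^ β < (2 : ℝ) ^ ((Kp p - 1) ^ 2)


/-- Sum of binary digits reconstructs `x % 2^k`. -/
lemma bits_sum (x k : ℕ) :
    ∑ t ∈ Finset.range k, (x / 2 ^ t % 2) * 2 ^ t = x % 2 ^ k := by
  induction k with
  | zero => simp [Nat.mod_one]
  | succ k ih =>
    rw [Finset.sum_range_succ, ih, pow_succ, Nat.mod_mul]
    ring

/-- A contiguous block of binary digits is a slice of `n`. -/
lemma slice_sum (n a b c : ℕ) (hab : a ≤ b) (hbc : b ≤ c) :
    ∑ j ∈ Finset.Icc (a + 1) b, (n / 2 ^ (c - j) % 2) * 2 ^ (b - j)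
      = n / 2 ^ (c - b) % 2 ^ (b - a) := by
  rw [← bits_sum (n / 2 ^ (c - b)) (b - a)]
  refine Finset.sum_bij' (fun j _ => b - j) (fun t _ => b - t) ?_ ?_ ?_ ?_ ?_
  · intro j hj; simp only [Finset.mem_Icc] at hj; simp only [Finset.mem_range]; omega
  · intro t ht; simp only [Finset.mem_range] at ht; simp only [Finset.mem_Icc]; omega
  · intro j hj; simp only [Finset.mem_Icc] at hj; omega
  · intro t ht; simp only [Finset.mem_range] at ht; omega
  · intro j hj; simp only [Finset.mem_Icc] at hj
    have h1 : c - j = (c - b) + (b - j) := by omega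
    rw [h1, pow_add, ← Nat.div_div_eq_div_mul]

/-- Lower part of a spread-out sum is small. -/
lemma low_bound (e c : ℕ → ℕ) (he : ∀ i, e i ≤ e (i + 1))
    (hc : ∀ i, c i < 2 ^ (e (i + 1) - e i)) (n : ℕ) :
    ∑ i ∈ Finset.Icc 1 n, c i * 2 ^ (e i) < 2 ^ (e (n + 1)) := by
  induction n with
  | zero => simp [Nat.two_pow_pos]
  | succ n ih =>
    rw [Finset.sum_Icc_succ_top (by omega)]
    have h1 : c (n + 1) + 1 ≤ 2 ^ (e (n + 2) - e (n + 1)) := hc (n + 1)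
    calc ∑ i ∈ Finset.Icc 1 n, c i * 2 ^ e i + c (n + 1) * 2 ^ e (n + 1)
        < (c (n + 1) + 1) * 2 ^ e (n + 1) := by
          have := ih
          nlinarith [pow_pos (by norm_num : (0:ℕ) < 2) (e (n+1))]
      _ ≤ 2 ^ (e (n + 2) - e (n + 1)) * 2 ^ e (n + 1) :=
          Nat.mul_le_mul_right _ h1
      _ = 2 ^ (e (n + 2)) := by
          rw [← pow_add]; congr 1; have h2 : e (n + 1) ≤ e (n + 2) := he (n + 1); omega

/-- Extraction of one coefficient from a spread-out sum. -/
lemma extract (e c : ℕ → ℕ) (he : ∀ i, e i ≤ e (i + 1))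
    (hc : ∀ i, c i < 2 ^ (e (i + 1) - e i)) (K i0 : ℕ) (h1 : 1 ≤ i0) (h2 : i0 ≤ K) :
    (∑ i ∈ Finset.Icc 1 K, c i * 2 ^ (e i)) / 2 ^ (e i0) % 2 ^ (e (i0 + 1) - e i0)
      = c i0 := by
  have emono : Monotone e := monotone_nat_of_le_succ he
  have hsplit : ∑ i ∈ Finset.Icc 1 K, c i * 2 ^ (e i)
      = (∑ i ∈ Finset.Icc 1 (i0 - 1), c i * 2 ^ (e i)) + c i0 * 2 ^ (e i0)
        + ∑ i ∈ Finset.Ioc i0 K, c i * 2 ^ (e i) := by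
    rw [(show ∀ b : ℕ, Finset.Icc 1 b = Finset.Ioc 0 b from fun b => Finset.Icc_add_one_left_eq_Ioc 0 b), ← Finset.sum_Ioc_consecutive _ (Nat.zero_le i0) h2]
    congr 1
    rw [(show ∀ b : ℕ, Finset.Icc 1 b = Finset.Ioc 0 b from fun b => Finset.Icc_add_one_left_eq_Ioc 0 b)]
    have : i0 = (i0 - 1) + 1 := by omega
    rw [this, Finset.sum_Ioc_succ_top (Nat.zero_le _)]
    rw [← this]
  -- the high part is divisible
  obtain ⟨h', hh'⟩ : (2 : ℕ) ^ (e (i0 + 1)) ∣ ∑ i ∈ Finset.Ioc i0 K, c i * 2 ^ (e i) := by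
    refine Finset.dvd_sum fun i hi => Dvd.dvd.mul_left ?_ _
    exact pow_dvd_pow 2 (emono (Finset.mem_Ioc.mp hi).1)
  have hlow : ∑ i ∈ Finset.Icc 1 (i0 - 1), c i * 2 ^ (e i) < 2 ^ (e i0) := by
    have := low_bound e c he hc (i0 - 1)
    have h3 : i0 - 1 + 1 = i0 := by omega
    rwa [h3] at this
  have hfac : (2 : ℕ) ^ (e (i0 + 1)) = 2 ^ (e (i0 + 1) - e i0) * 2 ^ (e i0) := by
    rw [← pow_add]; congr 1; have := he i0; omega
  rw [hfac] at hh'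
  rw [hsplit, hh']
  have hcomb : ∑ i ∈ Finset.Icc 1 (i0 - 1), c i * 2 ^ (e i) + c i0 * 2 ^ (e i0)
        + 2 ^ (e (i0 + 1) - e i0) * 2 ^ (e i0) * h'
      = ∑ i ∈ Finset.Icc 1 (i0 - 1), c i * 2 ^ (e i)
        + (c i0 + 2 ^ (e (i0 + 1) - e i0) * h') * 2 ^ (e i0) := by ring
  rw [hcomb, Nat.add_mul_div_right _ _ (pow_pos (by norm_num) (e i0)),
    Nat.div_eq_of_lt hlow, zero_add, Nat.add_mul_mod_self_left,
    Nat.mod_eq_of_lt (hc i0)]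

/-- Telescoping: the low blocks reconstruct `m % 2^(K²−L²)`. -/
lemma tele (m K L : ℕ) (hLK : L ≤ K) :
    m % 2 ^ (K ^ 2 - L ^ 2)
      = ∑ i ∈ Finset.Icc (L + 1) K,
          (m / 2 ^ (K ^ 2 - i ^ 2) % 2 ^ (i ^ 2 - (i - 1) ^ 2)) * 2 ^ (K ^ 2 - i ^ 2) := by
  have key : ∀ d, L + d ≤ K →
      (∑ i ∈ Finset.Icc (L + 1) (L + d),
          (m / 2 ^ (K ^ 2 - i ^ 2) % 2 ^ (i ^ 2 - (i - 1) ^ 2)) * 2 ^ (K ^ 2 - i ^ 2))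
        + m % 2 ^ (K ^ 2 - (L + d) ^ 2) = m % 2 ^ (K ^ 2 - L ^ 2) := by
    intro d
    induction d with
    | zero => simp
    | succ d ih =>
      intro hdK
      have hdK' : L + d ≤ K := by omega
      rw [← ih hdK']
      have hadd : L + (d + 1) = (L + d) + 1 := by omega
      rw [hadd, Finset.sum_Icc_succ_top (by omega)]
      set n := L + d with hn
      have hsq1 : (n + 1) ^ 2 ≤ K ^ 2 := Nat.pow_le_pow_left (by omega) 2
      have hsq2 : n ^ 2 ≤ (n + 1) ^ 2 := Nat.pow_le_pow_left (by omega) 2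
      have hexp : K ^ 2 - n ^ 2
          = (K ^ 2 - (n + 1) ^ 2) + ((n + 1) ^ 2 - n ^ 2) := by omega
      have hstep : m % 2 ^ (K ^ 2 - n ^ 2)
          = (m / 2 ^ (K ^ 2 - (n + 1) ^ 2) % 2 ^ ((n + 1) ^ 2 - n ^ 2))
            * 2 ^ (K ^ 2 - (n + 1) ^ 2) + m % 2 ^ (K ^ 2 - (n + 1) ^ 2) := by
        rw [hexp, pow_add, Nat.mod_mul]; ring
      have hsub : (n + 1) - 1 = n := by omega
      rw [hsub, hstep]
      ring
  have := key (K - L) (by omega)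
  have hKL' : L + (K - L) = K := by omega
  rw [hKL'] at this
  have : (∑ i ∈ Finset.Icc (L + 1) K,
      (m / 2 ^ (K ^ 2 - i ^ 2) % 2 ^ (i ^ 2 - (i - 1) ^ 2)) * 2 ^ (K ^ 2 - i ^ 2))
      + m % 2 ^ (K ^ 2 - K ^ 2) = m % 2 ^ (K ^ 2 - L ^ 2) := this
  simpa [Nat.mod_one] using this.symm

def Efun (i : ℕ) : ℕ := (i - 1) ^ 2 + 3 * i

lemma Efun_succ_le (i : ℕ) : Efun i ≤ Efun (i + 1) := by
  have h : (i - 1) ^ 2 ≤ i ^ 2 := Nat.pow_le_pow_left (by omega) 2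
  simp only [Efun, Nat.add_sub_cancel]
  omega

lemma Efun_gap (i : ℕ) : 2 * i + 1 ≤ Efun (i + 1) - Efun i := by
  rcases i with _ | j
  · simp [Efun]
  · have hs : (j + 1) ^ 2 = j ^ 2 + 2 * j + 1 := by ring
    simp only [Efun, Nat.add_sub_cancel]
    omega

lemma blk_eq (φ : ℕ → ℝ) (Kp : ℕ → ℕ) (α : ℝ) (x i : ℕ)
    (h1 : 1 ≤ i) (h2 : i ≤ Kp x) :
    Blk φ Kp α i x
      = mfun φ Kp α x / 2 ^ ((Kp x) ^ 2 - i ^ 2) % 2 ^ (i ^ 2 - (i - 1) ^ 2) := by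
  rw [Blk, if_pos h2]
  have hab : (i - 1) ^ 2 ≤ i ^ 2 := Nat.pow_le_pow_left (by omega) 2
  have hbc : i ^ 2 ≤ (Kp x) ^ 2 := Nat.pow_le_pow_left h2 2
  have hsq : (i - 1) ^ 2 + 1 ≤ i ^ 2 ∨ True := Or.inr trivial
  have h := slice_sum (mfun φ Kp α x) ((i - 1) ^ 2) (i ^ 2) ((Kp x) ^ 2) hab hbc
  simp only [dig]
  exact h

lemma blk_lt (φ : ℕ → ℝ) (Kp : ℕ → ℕ) (α : ℝ) (x i : ℕ) :
    Blk φ Kp α i x < 2 ^ (2 * i) := by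
  rcases Nat.eq_zero_or_pos i with rfl | hi
  · rw [Blk]
    split
    · simp
    · simp
  by_cases h2 : i ≤ Kp x
  · rw [blk_eq φ Kp α x i hi h2]
    have hlt : mfun φ Kp α x / 2 ^ ((Kp x) ^ 2 - i ^ 2) % 2 ^ (i ^ 2 - (i - 1) ^ 2)
        < 2 ^ (i ^ 2 - (i - 1) ^ 2) := Nat.mod_lt _ (pow_pos (by norm_num) _)
    refine lt_of_lt_of_le hlt (Nat.pow_le_pow_right (by norm_num) ?_)
    obtain ⟨j, rfl⟩ : ∃ j, i = j + 1 := ⟨i - 1, by omega⟩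
    have hs : (j + 1) ^ 2 = j ^ 2 + 2 * j + 1 := by ring
    simp only [Nat.add_sub_cancel]
    omega
  · rw [Blk, if_neg h2]
    exact pow_pos (by norm_num) _

lemma blk_sum_lt (φ : ℕ → ℝ) (Kp : ℕ → ℕ) (α : ℝ) (x y i : ℕ) :
    Blk φ Kp α i x + Blk φ Kp α i y < 2 ^ (Efun (i + 1) - Efun i) := by
  have h1 := blk_lt φ Kp α x i
  have h2 := blk_lt φ Kp α y i
  have h3 : 2 ^ (2 * i) + 2 ^ (2 * i) = 2 ^ (2 * i + 1) := by ring
  have h4 : (2 : ℕ) ^ (2 * i + 1) ≤ 2 ^ (Efun (i + 1) - Efun i) :=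
    Nat.pow_le_pow_right (by norm_num) (Efun_gap i)
  omega

lemma afun_eq (φ : ℕ → ℝ) (Kp : ℕ → ℕ) (α : ℝ) (x K : ℕ) (hx : Kp x ≤ K) :
    afun φ Kp α x
      = (∑ i ∈ Finset.Icc 1 K, Blk φ Kp α i x * 2 ^ (Efun i)) + tfun Kp x := by
  rw [afun]
  congr 1
  refine Finset.sum_subset (Finset.Icc_subset_Icc_right hx) ?_
  · intro i hi hni
    simp only [Finset.mem_Icc] at hi hni
    rw [Blk, if_neg (by omega)]
    ring

theorem stmt11 (β α : ℝ) (hβ : 2 < β) (hα : α ∈ Set.Ico (1 : ℝ) 2)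
    (u v Kp : ℕ → ℕ) (φ : ℕ → ℝ) (hφ : PhiHyp u v φ) (hKp : KpHyp β Kp)
    (p q r s K L : ℕ)
    (hp : p.Prime) (hp4 : p % 4 = 1) (hpK : Kp p = K)
    (hq : q.Prime) (hq4 : q % 4 = 1) (hqL : Kp q = L)
    (hr : r.Prime) (hr4 : r % 4 = 1) (hrK : Kp r = K)
    (hs : s.Prime) (hs4 : s % 4 = 1) (hsL : Kp s = L)
    (hKL : L ≤ K)
    (hbad : IsBad φ Kp α p q r s) :
    mfun φ Kp α p ≡ mfun φ Kp α r [MOD 2 ^ (K ^ 2 - L ^ 2)] :=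
  by
  classical
  obtain ⟨hsum, -, -, -⟩ := hbad
  -- rewrite all four a-values as sums over `Icc 1 K`
  rw [afun_eq φ Kp α p K (le_of_eq hpK), afun_eq φ Kp α q K (hqL ▸ hKL),
    afun_eq φ Kp α r K (le_of_eq hrK), afun_eq φ Kp α s K (hsL ▸ hKL)] at hsum
  have ht1 : tfun Kp p = tfun Kp r := by rw [tfun, tfun, hpK, hrK]
  have ht2 : tfun Kp q = tfun Kp s := by rw [tfun, tfun, hqL, hsL]
  have hS : (∑ i ∈ Finset.Icc 1 K, (Blk φ Kp α i p + Blk φ Kp α i q) * 2 ^ (Efun i))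
      = ∑ i ∈ Finset.Icc 1 K, (Blk φ Kp α i r + Blk φ Kp α i s) * 2 ^ (Efun i) := by
    simp only [add_mul, Finset.sum_add_distrib]
    omega
  have hblk : ∀ i ∈ Finset.Icc (L + 1) K, Blk φ Kp α i p = Blk φ Kp α i r := by
    intro i hi
    simp only [Finset.mem_Icc] at hi
    have e1 := extract Efun (fun i => Blk φ Kp α i p + Blk φ Kp α i q)
      Efun_succ_le (fun i => blk_sum_lt φ Kp α p q i) K i (by omega) hi.2
    have e2 := extract Efun (fun i => Blk φ Kp α i r + Blk φ Kp α i s)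
      Efun_succ_le (fun i => blk_sum_lt φ Kp α r s i) K i (by omega) hi.2
    rw [hS] at e1
    have hq0 : Blk φ Kp α i q = 0 := by rw [Blk, if_neg (by omega)]
    have hs0 : Blk φ Kp α i s = 0 := by rw [Blk, if_neg (by omega)]
    rw [hq0] at e1
    rw [hs0] at e2
    omega
  show mfun φ Kp α p % 2 ^ (K ^ 2 - L ^ 2) = mfun φ Kp α r % 2 ^ (K ^ 2 - L ^ 2)
  rw [tele (mfun φ Kp α p) K L hKL, tele (mfun φ Kp α r) K L hKL]
  refine Finset.sum_congr rfl fun i hi => ?_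
  simp only [Finset.mem_Icc] at hi
  have hbp := blk_eq φ Kp α p i (by omega) (by omega)
  have hbr := blk_eq φ Kp α r i (by omega) (by omega)
  rw [hpK] at hbp
  rw [hrK] at hbr
  rw [← hbp, ← hbr, hblk i (Finset.mem_Icc.mpr hi)]
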